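/- Let α(r) = 4C₂² and γ(r) = (βr² − C₃r^p)/(4C₂²) with constants C₂, C₃ > 0, β ∈ ℝ, and p > 2. Define C(r) = exp(∫₁^r γ(u)/u du) and F(r) = −∫₀^r C(s)^{-1} (∫_s^∞ C(u)/α(u) du) ds. Then F is finite on [0, ∞), nonincreasing, and lim_{r→∞} F(r) = −∫₀^∞ C(s)^{-1}(∫_s^∞ C(u)/α(u) du) ds > −∞; in particular sup_{r>0} (−F(r)) < ∞. -/

import Mathlib

open MeasureTheory Filter Set Real


noncomputable def Cfun (β C₂ C₃ p : ℝ) (r : ℝ) : ℝ :=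
  Real.exp (∫ u in (1:ℝ)..r, ((β * u ^ 2 - C₃ * u ^ p) / (4 * C₂ ^ 2)) / u)

noncomputable def Gfun (β C₂ C₃ p : ℝ) (s : ℝ) : ℝ :=
  ∫ u in Set.Ioi s, Cfun β C₂ C₃ p u / (4 * C₂ ^ 2)

noncomputable def Ffun (β C₂ C₃ p : ℝ) (r : ℝ) : ℝ :=
  -∫ s in (0:ℝ)..r, (Cfun β C₂ C₃ p s)⁻¹ * Gfun β C₂ C₃ p s

namespace St8

variable (β C₂ C₃ p : ℝ)

noncomputable def phi (r : ℝ) : ℝ := (β * r ^ 2 / 2 - C₃ * r ^ p / p) / (4 * C₂ ^ 2)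

noncomputable def g (u : ℝ) : ℝ := (β * u - C₃ * u ^ (p - 1)) / (4 * C₂ ^ 2)

noncomputable def f (u : ℝ) : ℝ := ((β * u ^ 2 - C₃ * u ^ p) / (4 * C₂ ^ 2)) / u

theorem hasDerivAt_phi (hp : 2 < p) (u : ℝ) :
    HasDerivAt (phi β C₂ C₃ p) (g β C₂ C₃ p u) u := by
  have hp0 : p ≠ 0 := by intro h; rw [h] at hp; linarith
  have h1 : HasDerivAt (fun x : ℝ => x ^ p) (p * u ^ (p - 1)) u :=
    Real.hasDerivAt_rpow_const (Or.inr (by linarith))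
  have h2 : HasDerivAt (fun x : ℝ => x ^ 2) (2 * u) u := by
    simpa using hasDerivAt_pow 2 u
  have h3 : HasDerivAt (fun r : ℝ => (β * r ^ 2 / 2 - C₃ * r ^ p / p) / (4 * C₂ ^ 2))
      ((β * (2 * u) / 2 - C₃ * (p * u ^ (p - 1)) / p) / (4 * C₂ ^ 2)) u :=
    (((h2.const_mul β).div_const 2).sub ((h1.const_mul C₃).div_const p)).div_const _
  have e1 : β * (2 * u) / 2 = β * u := by ring
  have e2 : C₃ * (p * u ^ (p - 1)) / p = C₃ * u ^ (p - 1) := by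
    field_simp
  rw [e1, e2] at h3
  exact h3

theorem f_eq_g (hp : 2 < p) {u : ℝ} (hu : 0 ≤ u) : f β C₂ C₃ p u = g β C₂ C₃ p u := by
  have hp0 : p ≠ 0 := by intro h; rw [h] at hp; linarith
  have hp1 : p - 1 ≠ 0 := by intro h; have h' : p = 1 := by linarith
                             rw [h'] at hp; linarith
  rcases eq_or_lt_of_le hu with h | h
  · simp [f, g, ← h, Real.zero_rpow hp0, Real.zero_rpow hp1]
  · have hu0 : u ≠ 0 := ne_of_gt h
    have e : u ^ p = u ^ (p - 1) * u := by
      rw [← Real.rpow_add_one hu0 (p-1)]; ring_nf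
    unfold f g
    rw [e, show β * u ^ 2 - C₃ * (u ^ (p - 1) * u) = (β * u - C₃ * u ^ (p - 1)) * u from by ring,
      div_div, mul_comm (4 * C₂ ^ 2) u, ← div_div, mul_div_assoc, div_self hu0, mul_one]

theorem continuous_g (hp : 2 < p) : Continuous (g β C₂ C₃ p) := by
  apply Continuous.div_const
  exact (continuous_const.mul continuous_id).sub
    (continuous_const.mul (continuous_id.rpow_const fun x => Or.inr (by linarith)))

theorem abs_f_le (hp : 2 < p) (hC₂ : 0 < C₂) (hC₃ : 0 < C₃) (u : ℝ) :
    |f β C₂ C₃ p u| ≤ (|β| * |u| + C₃ * |u| ^ (p - 1)) / (4 * C₂ ^ 2) := by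
  have hp0 : p ≠ 0 := by intro h; rw [h] at hp; linarith
  have hp1 : p - 1 ≠ 0 := by intro h; have h' : p = 1 := by linarith
                             rw [h'] at hp; linarith
  have hA : (0:ℝ) < 4 * C₂ ^ 2 := by positivity
  rcases eq_or_ne u 0 with rfl | hu0
  · simp [f, Real.zero_rpow hp0, Real.zero_rpow hp1]
  · have habs : |u| ≠ 0 := abs_ne_zero.mpr hu0
    have key : |β * u ^ 2 - C₃ * u ^ p| ≤ (|β| * |u| + C₃ * |u| ^ (p - 1)) * |u| := by
      have e : |u| ^ p = |u| ^ (p - 1) * |u| := by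
        rw [← Real.rpow_add_one habs]; ring_nf
      calc |β * u ^ 2 - C₃ * u ^ p| ≤ |β * u ^ 2| + |C₃ * u ^ p| := abs_sub _ _
        _ ≤ |β| * u ^ 2 + C₃ * |u| ^ p := by
            rw [abs_mul, abs_mul, abs_of_pos hC₃, abs_pow, sq_abs]
            gcongr
            exact Real.abs_rpow_le_abs_rpow u p
        _ = (|β| * |u| + C₃ * |u| ^ (p - 1)) * |u| := by
            rw [e, ← sq_abs]; ring
    unfold f
    rw [abs_div, abs_div, abs_of_pos hA, div_right_comm]
    gcongr
    rw [div_le_iff₀ (abs_pos.mpr hu0)]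
    exact key

theorem intervalIntegrable_f (hp : 2 < p) (hC₂ : 0 < C₂) (hC₃ : 0 < C₃) (a b : ℝ) :
    IntervalIntegrable (f β C₂ C₃ p) volume a b := by
  have hmeas : Measurable (f β C₂ C₃ p) := by
    unfold f; fun_prop
  have hcont : Continuous fun u : ℝ => (|β| * |u| + C₃ * |u| ^ (p - 1)) / (4 * C₂ ^ 2) := by
    apply Continuous.div_const
    exact (continuous_const.mul continuous_abs).add
      (continuous_const.mul (continuous_abs.rpow_const fun x => Or.inr (by linarith)))
  rw [intervalIntegrable_iff]
  exact (hcont.intervalIntegrable a b).def'.mono' hmeas.aestronglyMeasurable.restrict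
    (Filter.Eventually.of_forall fun u => abs_f_le β C₂ C₃ p hp hC₂ hC₃ u)

theorem continuous_Cfun (hp : 2 < p) (hC₂ : 0 < C₂) (hC₃ : 0 < C₃) :
    Continuous (Cfun β C₂ C₃ p) := by
  have : Continuous fun r : ℝ => ∫ u in (1:ℝ)..r, f β C₂ C₃ p u :=
    intervalIntegral.continuous_primitive (intervalIntegrable_f β C₂ C₃ p hp hC₂ hC₃) 1
  exact Real.continuous_exp.comp this

theorem Cfun_pos (r : ℝ) : 0 < Cfun β C₂ C₃ p r := Real.exp_pos _

theorem Cfun_eq (hp : 2 < p) {r : ℝ} (hr : 0 ≤ r) :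
    Cfun β C₂ C₃ p r = Real.exp (phi β C₂ C₃ p r - phi β C₂ C₃ p 1) := by
  unfold Cfun
  congr 1
  have h1 : EqOn (f β C₂ C₃ p) (g β C₂ C₃ p) (Set.uIcc 1 r) := by
    intro u hu
    apply f_eq_g β C₂ C₃ p hp
    rcases Set.mem_uIcc.mp hu with ⟨h, _⟩ | ⟨h, _⟩
    · linarith
    · linarith
  show (∫ u in (1:ℝ)..r, f β C₂ C₃ p u) = _
  rw [intervalIntegral.integral_congr h1]
  exact intervalIntegral.integral_eq_sub_of_hasDerivAt
    (fun u _ => hasDerivAt_phi β C₂ C₃ p hp u)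
    ((continuous_g β C₂ C₃ p hp).intervalIntegrable 1 r)

theorem exists_M (hp : 2 < p) (hC₂ : 0 < C₂) (hC₃ : 0 < C₃) :
    ∃ M : ℝ, 1 ≤ M ∧ (∀ u, M ≤ u → β ≤ C₃ * (p - 1) * u ^ (p - 2)) ∧
      (∀ s, M ≤ s → β * s ≤ C₃ / 2 * s ^ (p - 1)) ∧
      (∀ s, M ≤ s → 4 * C₂ ^ 2 ≤ C₃ / 2 * s ^ (p - 1)) := by
  have t1 : Tendsto (fun u : ℝ => C₃ * (p - 1) * u ^ (p - 2)) atTop atTop :=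
    (tendsto_rpow_atTop (by linarith)).const_mul_atTop (by nlinarith)
  have t2 : Tendsto (fun u : ℝ => C₃ / 2 * u ^ (p - 2)) atTop atTop :=
    (tendsto_rpow_atTop (by linarith)).const_mul_atTop (by positivity)
  have t3 : Tendsto (fun u : ℝ => C₃ / 2 * u ^ (p - 1)) atTop atTop :=
    (tendsto_rpow_atTop (by linarith)).const_mul_atTop (by positivity)
  have E : ∀ᶠ u : ℝ in atTop, (β ≤ C₃ * (p - 1) * u ^ (p - 2)) ∧
      (β ≤ C₃ / 2 * u ^ (p - 2)) ∧ (4 * C₂ ^ 2 ≤ C₃ / 2 * u ^ (p - 1)) ∧ 1 ≤ u :=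
    ((t1.eventually_ge_atTop β).and ((t2.eventually_ge_atTop β).and
      ((t3.eventually_ge_atTop (4 * C₂ ^ 2)).and (eventually_ge_atTop 1))))
  obtain ⟨M₀, hM₀⟩ := eventually_atTop.1 E
  refine ⟨max M₀ 1, le_max_right _ _, ?_, ?_, ?_⟩
  · intro u hu; exact (hM₀ u ((le_max_left _ _).trans hu)).1
  · intro s hs
    obtain ⟨_, h2, _, h4⟩ := hM₀ s ((le_max_left _ _).trans hs)
    have hs0 : s ≠ 0 := by intro h; rw [h] at h4; linarith
    have e : s ^ (p - 1) = s ^ (p - 2) * s := by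
      rw [show p - 1 = (p - 2) + 1 by ring, Real.rpow_add_one hs0]
    rw [e, ← mul_assoc]
    exact mul_le_mul_of_nonneg_right h2 (by linarith)
  · intro s hs
    exact (hM₀ s ((le_max_left _ _).trans hs)).2.2.1

theorem hasDerivAt_g (hp : 2 < p) {u : ℝ} (hu : u ≠ 0) :
    HasDerivAt (g β C₂ C₃ p) ((β - C₃ * ((p - 1) * u ^ (p - 2))) / (4 * C₂ ^ 2)) u := by
  have h1 : HasDerivAt (fun x : ℝ => x ^ (p - 1)) ((p - 1) * u ^ (p - 1 - 1)) u :=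
    Real.hasDerivAt_rpow_const (Or.inl hu)
  rw [show p - 1 - 1 = p - 2 by ring] at h1
  have h2 : HasDerivAt (fun x : ℝ => β * x) β u := by
    simpa using (hasDerivAt_id u).const_mul β
  exact (h2.sub (h1.const_mul C₃)).div_const _

theorem g_anti (hp : 2 < p) (hC₂ : 0 < C₂) {M : ℝ} (hM1 : 1 ≤ M)
    (hM2 : ∀ u, M ≤ u → β ≤ C₃ * (p - 1) * u ^ (p - 2)) :
    AntitoneOn (g β C₂ C₃ p) (Ici M) := by
  apply antitoneOn_of_deriv_nonpos (convex_Ici M) (continuous_g β C₂ C₃ p hp).continuousOn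
  · intro x hx
    rw [interior_Ici] at hx
    exact (hasDerivAt_g β C₂ C₃ p hp (by intro h; rw [h] at hx; simp at hx; linarith)).differentiableAt.differentiableWithinAt
  · intro x hx
    rw [interior_Ici] at hx
    have hx0 : x ≠ 0 := by intro h; rw [h] at hx; simp at hx; linarith
    rw [(hasDerivAt_g β C₂ C₃ p hp hx0).deriv]
    apply div_nonpos_of_nonpos_of_nonneg _ (by positivity)
    have := hM2 x (le_of_lt hx)
    rw [← mul_assoc]
    linarith

theorem phi_diff_le (hp : 2 < p) (hC₂ : 0 < C₂) {M s u : ℝ} (hM1 : 1 ≤ M)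
    (hM2 : ∀ u, M ≤ u → β ≤ C₃ * (p - 1) * u ^ (p - 2)) (hs : M ≤ s) (hu : s ≤ u) :
    phi β C₂ C₃ p u - phi β C₂ C₃ p s ≤ g β C₂ C₃ p s * (u - s) := by
  have hfc : phi β C₂ C₃ p u - phi β C₂ C₃ p s = ∫ x in s..u, g β C₂ C₃ p x :=
    (intervalIntegral.integral_eq_sub_of_hasDerivAt
      (fun x _ => hasDerivAt_phi β C₂ C₃ p hp x)
      ((continuous_g β C₂ C₃ p hp).intervalIntegrable s u)).symm
  rw [hfc]
  calc (∫ x in s..u, g β C₂ C₃ p x) ≤ ∫ _x in s..u, g β C₂ C₃ p s := by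
        apply intervalIntegral.integral_mono_on hu
          ((continuous_g β C₂ C₃ p hp).intervalIntegrable s u)
          (intervalIntegrable_const)
        intro x hx
        exact g_anti β C₂ C₃ p hp hC₂ hM1 hM2 hs (hs.trans hx.1) hx.1
    _ = g β C₂ C₃ p s * (u - s) := by
        rw [intervalIntegral.integral_const, smul_eq_mul, mul_comm]

theorem Cfun_le (hp : 2 < p) (hC₂ : 0 < C₂) {M s u : ℝ} (hM1 : 1 ≤ M)
    (hM2 : ∀ u, M ≤ u → β ≤ C₃ * (p - 1) * u ^ (p - 2)) (hs : M ≤ s) (hu : s ≤ u) :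
    Cfun β C₂ C₃ p u ≤ Cfun β C₂ C₃ p s * Real.exp (g β C₂ C₃ p s * (u - s)) := by
  rw [Cfun_eq β C₂ C₃ p hp (by linarith : (0:ℝ) ≤ u),
    Cfun_eq β C₂ C₃ p hp (by linarith : (0:ℝ) ≤ s), ← Real.exp_add]
  apply Real.exp_le_exp.2
  have := phi_diff_le β C₂ C₃ p hp hC₂ hM1 hM2 hs hu
  linarith

theorem integrableOn_exp_shift {c s : ℝ} (hc : 0 < c) :
    IntegrableOn (fun u : ℝ => Real.exp (-c * (u - s))) (Ioi s) := by
  have e : (fun u : ℝ => Real.exp (-c * (u - s))) =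
      fun u : ℝ => Real.exp (c * s) * Real.exp (-c * u) := by
    funext u; rw [← Real.exp_add]; ring_nf
  rw [e]
  exact (exp_neg_integrableOn_Ioi s hc).const_mul _

theorem integral_exp_shift {c s : ℝ} (hc : 0 < c) :
    (∫ u in Ioi s, Real.exp (-c * (u - s))) = 1 / c := by
  have h1 : ∀ x ∈ Ici s, HasDerivAt (fun u : ℝ => -(Real.exp (-c * (u - s)) / c))
      (Real.exp (-c * (x - s))) x := by
    intro x _
    have hd : HasDerivAt (fun u : ℝ => -c * (u - s)) (-c) x := by
      simpa using ((hasDerivAt_id x).sub_const s).const_mul (-c)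
    have h2 := (Real.hasDerivAt_exp (-c * (x - s))).comp x hd
    have h3 := (h2.div_const c).neg
    have e : -(Real.exp (-c * (x - s)) * -c / c) = Real.exp (-c * (x - s)) := by
      rw [mul_neg, neg_div, neg_neg, mul_div_assoc, div_self hc.ne', mul_one]
    rw [e] at h3
    exact h3
  have h2 : Tendsto (fun u : ℝ => -(Real.exp (-c * (u - s)) / c)) atTop (nhds 0) := by
    have ht : Tendsto (fun u : ℝ => -c * (u - s)) atTop atBot := by
      apply Tendsto.const_mul_atTop_of_neg (neg_neg_iff_pos.2 hc)
      · exact tendsto_atTop_add_const_right atTop (-s) tendsto_id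
    have := (Real.tendsto_exp_atBot.comp ht).div_const c
    simpa using this.neg
  have := integral_Ioi_of_hasDerivAt_of_tendsto' h1 (integrableOn_exp_shift hc) h2
  rw [this]
  simp [Real.exp_zero]

theorem neg_g_ge (hp : 2 < p) (hC₂ : 0 < C₂) {M s : ℝ}
    (hM3 : ∀ s, M ≤ s → β * s ≤ C₃ / 2 * s ^ (p - 1))
    (hM4 : ∀ s, M ≤ s → 4 * C₂ ^ 2 ≤ C₃ / 2 * s ^ (p - 1)) (hs : M ≤ s) :
    1 ≤ -g β C₂ C₃ p s ∧ C₃ / 2 * s ^ (p - 1) / (4 * C₂ ^ 2) ≤ -g β C₂ C₃ p s := by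
  have hA : (0:ℝ) < 4 * C₂ ^ 2 := by positivity
  have h3 := hM3 s hs
  have h4 := hM4 s hs
  have e : -g β C₂ C₃ p s = (C₃ * s ^ (p - 1) - β * s) / (4 * C₂ ^ 2) := by
    unfold g; ring
  constructor
  · rw [e, le_div_iff₀ hA, one_mul]; linarith
  · rw [e]
    gcongr
    linarith

theorem integrableOn_Cfun (hp : 2 < p) (hC₂ : 0 < C₂) (hC₃ : 0 < C₃) (s : ℝ) :
    IntegrableOn (Cfun β C₂ C₃ p) (Ioi s) := by
  obtain ⟨M, hM1, hM2, hM3, hM4⟩ := exists_M β C₂ C₃ p hp hC₂ hC₃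
  have hng := neg_g_ge β C₂ C₃ p hp hC₂ hM3 hM4 (le_refl M)
  have hc : 0 < -g β C₂ C₃ p M := by linarith [hng.1]
  have tail : IntegrableOn (Cfun β C₂ C₃ p) (Ioi M) := by
    apply Integrable.mono'
      ((integrableOn_exp_shift (s := M) hc).const_mul (Cfun β C₂ C₃ p M))
      ((continuous_Cfun β C₂ C₃ p hp hC₂ hC₃).aestronglyMeasurable.restrict)
    rw [ae_restrict_iff' measurableSet_Ioi]
    apply Filter.Eventually.of_forall
    intro u hu
    rw [Real.norm_eq_abs, abs_of_pos (Cfun_pos β C₂ C₃ p u)]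
    have := Cfun_le β C₂ C₃ p hp hC₂ hM1 hM2 (le_refl M) (le_of_lt hu)
    simpa [neg_neg] using this
  rcases le_total M s with h | h
  · exact tail.mono_set (Ioi_subset_Ioi h)
  · have hsub : Ioi s ⊆ Ioc s M ∪ Ioi M := by
      intro x hx
      rcases le_or_gt x M with h' | h'
      · exact Or.inl ⟨hx, h'⟩
      · exact Or.inr h'
    exact (((continuous_Cfun β C₂ C₃ p hp hC₂ hC₃).integrableOn_Ioc).union tail).mono_set hsub

theorem integrableOn_Cdiv (hp : 2 < p) (hC₂ : 0 < C₂) (hC₃ : 0 < C₃) (s : ℝ) :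
    IntegrableOn (fun u => Cfun β C₂ C₃ p u / (4 * C₂ ^ 2)) (Ioi s) :=
  (integrableOn_Cfun β C₂ C₃ p hp hC₂ hC₃ s).div_const _

theorem Gfun_nonneg (s : ℝ) : 0 ≤ Gfun β C₂ C₃ p s :=
  setIntegral_nonneg measurableSet_Ioi fun x _ =>
    div_nonneg (Cfun_pos β C₂ C₃ p x).le (by positivity)

theorem Gfun_anti (hp : 2 < p) (hC₂ : 0 < C₂) (hC₃ : 0 < C₃) :
    Antitone (Gfun β C₂ C₃ p) := by
  intro s₁ s₂ h
  apply setIntegral_mono_set (integrableOn_Cdiv β C₂ C₃ p hp hC₂ hC₃ s₁)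
    (ae_of_all _ fun x => div_nonneg (Cfun_pos β C₂ C₃ p x).le (by positivity))
    (HasSubset.Subset.eventuallyLE (Ioi_subset_Ioi h))

theorem Gfun_le (hp : 2 < p) (hC₂ : 0 < C₂) (hC₃ : 0 < C₃) {M s : ℝ} (hM1 : 1 ≤ M)
    (hM2 : ∀ u, M ≤ u → β ≤ C₃ * (p - 1) * u ^ (p - 2))
    (hM3 : ∀ s, M ≤ s → β * s ≤ C₃ / 2 * s ^ (p - 1))
    (hM4 : ∀ s, M ≤ s → 4 * C₂ ^ 2 ≤ C₃ / 2 * s ^ (p - 1)) (hs : M ≤ s) :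
    Gfun β C₂ C₃ p s ≤ Cfun β C₂ C₃ p s / (4 * C₂ ^ 2) * (1 / (-g β C₂ C₃ p s)) := by
  have hng := neg_g_ge β C₂ C₃ p hp hC₂ hM3 hM4 hs
  have hc : 0 < -g β C₂ C₃ p s := by linarith [hng.1]
  have step : Gfun β C₂ C₃ p s ≤
      ∫ u in Ioi s, Cfun β C₂ C₃ p s / (4 * C₂ ^ 2) * Real.exp (-(-g β C₂ C₃ p s) * (u - s)) := by
    apply setIntegral_mono_on (integrableOn_Cdiv β C₂ C₃ p hp hC₂ hC₃ s)
      ((integrableOn_exp_shift hc).const_mul _) measurableSet_Ioi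
    intro u hu
    rw [neg_neg, div_mul_eq_mul_div]
    have := Cfun_le β C₂ C₃ p hp hC₂ hM1 hM2 hs (le_of_lt hu)
    gcongr
  calc Gfun β C₂ C₃ p s ≤ _ := step
    _ = Cfun β C₂ C₃ p s / (4 * C₂ ^ 2) * (1 / (-g β C₂ C₃ p s)) := by
        rw [integral_const_mul, integral_exp_shift hc]

theorem h_le (hp : 2 < p) (hC₂ : 0 < C₂) (hC₃ : 0 < C₃) {M s : ℝ} (hM1 : 1 ≤ M)
    (hM2 : ∀ u, M ≤ u → β ≤ C₃ * (p - 1) * u ^ (p - 2))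
    (hM3 : ∀ s, M ≤ s → β * s ≤ C₃ / 2 * s ^ (p - 1))
    (hM4 : ∀ s, M ≤ s → 4 * C₂ ^ 2 ≤ C₃ / 2 * s ^ (p - 1)) (hs : M ≤ s) :
    (Cfun β C₂ C₃ p s)⁻¹ * Gfun β C₂ C₃ p s ≤ 2 / C₃ * s ^ (1 - p) := by
  have hA : (0:ℝ) < 4 * C₂ ^ 2 := by positivity
  have hng := neg_g_ge β C₂ C₃ p hp hC₂ hM3 hM4 hs
  have hc : 0 < -g β C₂ C₃ p s := by linarith [hng.1]
  have hCp := Cfun_pos β C₂ C₃ p s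
  have hs0 : (0:ℝ) < s := lt_of_lt_of_le one_pos (hM1.trans hs)
  have h1 : (Cfun β C₂ C₃ p s)⁻¹ * Gfun β C₂ C₃ p s ≤
      (Cfun β C₂ C₃ p s)⁻¹ * (Cfun β C₂ C₃ p s / (4 * C₂ ^ 2) * (1 / (-g β C₂ C₃ p s))) :=
    mul_le_mul_of_nonneg_left (Gfun_le β C₂ C₃ p hp hC₂ hC₃ hM1 hM2 hM3 hM4 hs)
      (inv_nonneg.2 hCp.le)
  have h2 : (Cfun β C₂ C₃ p s)⁻¹ * (Cfun β C₂ C₃ p s / (4 * C₂ ^ 2) * (1 / (-g β C₂ C₃ p s)))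
      = 1 / (4 * C₂ ^ 2 * (-g β C₂ C₃ p s)) := by
    field_simp
  have h3 : C₃ / 2 * s ^ (p - 1) ≤ 4 * C₂ ^ 2 * (-g β C₂ C₃ p s) := by
    have := (div_le_iff₀ hA).1 hng.2
    linarith
  have hsp : (0:ℝ) < C₃ / 2 * s ^ (p - 1) := by positivity
  have h4 : 1 / (4 * C₂ ^ 2 * (-g β C₂ C₃ p s)) ≤ 1 / (C₃ / 2 * s ^ (p - 1)) :=
    one_div_le_one_div_of_le hsp h3
  have e : 1 / (C₃ / 2 * s ^ (p - 1)) = 2 / C₃ * s ^ (1 - p) := by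
    rw [show (1:ℝ) - p = -(p - 1) by ring, Real.rpow_neg hs0.le]
    have : s ^ (p - 1) ≠ 0 := by positivity
    field_simp
  calc (Cfun β C₂ C₃ p s)⁻¹ * Gfun β C₂ C₃ p s ≤ _ := h1
    _ = _ := h2
    _ ≤ _ := h4
    _ = _ := e

theorem h_meas (hp : 2 < p) (hC₂ : 0 < C₂) (hC₃ : 0 < C₃) :
    Measurable (fun s => (Cfun β C₂ C₃ p s)⁻¹ * Gfun β C₂ C₃ p s) :=
  ((continuous_Cfun β C₂ C₃ p hp hC₂ hC₃).measurable.inv).mul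
    (Gfun_anti β C₂ C₃ p hp hC₂ hC₃).measurable

theorem h_nonneg (s : ℝ) : 0 ≤ (Cfun β C₂ C₃ p s)⁻¹ * Gfun β C₂ C₃ p s :=
  mul_nonneg (inv_nonneg.2 (Cfun_pos β C₂ C₃ p s).le) (Gfun_nonneg β C₂ C₃ p s)

theorem integrableOn_h (hp : 2 < p) (hC₂ : 0 < C₂) (hC₃ : 0 < C₃) :
    IntegrableOn (fun s => (Cfun β C₂ C₃ p s)⁻¹ * Gfun β C₂ C₃ p s) (Ioi 0) := by
  obtain ⟨M, hM1, hM2, hM3, hM4⟩ := exists_M β C₂ C₃ p hp hC₂ hC₃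
  have hM0 : (0:ℝ) < M := lt_of_lt_of_le one_pos hM1
  obtain ⟨x₀, hx₀mem, hx₀'⟩ := (isCompact_Icc (a := (0:ℝ)) (b := M)).exists_isMaxOn
    ⟨0, le_refl 0, hM0.le⟩
    (((continuous_Cfun β C₂ C₃ p hp hC₂ hC₃).continuousOn).inv₀
      fun x _ => (Cfun_pos β C₂ C₃ p x).ne')
  have hx₀ : ∀ y ∈ Icc (0:ℝ) M, (Cfun β C₂ C₃ p y)⁻¹ ≤ (Cfun β C₂ C₃ p x₀)⁻¹ :=
    fun y hy => hx₀' hy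
  have part1 : IntegrableOn (fun s => (Cfun β C₂ C₃ p s)⁻¹ * Gfun β C₂ C₃ p s) (Ioc 0 M) := by
    apply Integrable.mono' (integrableOn_const (C := (Cfun β C₂ C₃ p x₀)⁻¹ * Gfun β C₂ C₃ p 0) measure_Ioc_lt_top.ne)
      (h_meas β C₂ C₃ p hp hC₂ hC₃).aestronglyMeasurable.restrict
    rw [ae_restrict_iff' measurableSet_Ioc]
    apply Filter.Eventually.of_forall
    intro y hy
    rw [Real.norm_eq_abs, abs_of_nonneg (h_nonneg β C₂ C₃ p y)]
    exact mul_le_mul (hx₀ y ⟨hy.1.le, hy.2⟩)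
      (Gfun_anti β C₂ C₃ p hp hC₂ hC₃ hy.1.le) (Gfun_nonneg β C₂ C₃ p y)
      (inv_nonneg.2 (Cfun_pos β C₂ C₃ p x₀).le)
  have part2 : IntegrableOn (fun s => (Cfun β C₂ C₃ p s)⁻¹ * Gfun β C₂ C₃ p s) (Ioi M) := by
    apply Integrable.mono'
      (((integrableOn_Ioi_rpow_of_lt (by linarith : 1 - p < -1) hM0)).const_mul (2 / C₃))
      (h_meas β C₂ C₃ p hp hC₂ hC₃).aestronglyMeasurable.restrict
    rw [ae_restrict_iff' measurableSet_Ioi]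
    refine Filter.Eventually.of_forall fun y hy => ?_
    rw [Real.norm_eq_abs, abs_of_nonneg (h_nonneg β C₂ C₃ p y)]
    exact h_le β C₂ C₃ p hp hC₂ hC₃ hM1 hM2 hM3 hM4 (le_of_lt hy)
  have hsub : Ioi (0:ℝ) ⊆ Ioc 0 M ∪ Ioi M := by
    intro x hx
    rcases le_or_gt x M with h' | h'
    · exact Or.inl ⟨hx, h'⟩
    · exact Or.inr h'
  exact (part1.union part2).mono_set hsub

end St8

open St8 in
/-- The Chen–Li functionals for coupling by reflection: `F` is finite,
nonincreasing, has a finite limit at infinity, and `-F` is bounded. -/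
theorem stmt8 (β C₂ C₃ p : ℝ) (hC₂ : 0 < C₂) (hC₃ : 0 < C₃) (hp : 2 < p) :
    (∀ s : ℝ, 0 ≤ s →
      IntegrableOn (fun u => Cfun β C₂ C₃ p u / (4 * C₂ ^ 2)) (Set.Ioi s)) ∧
    AntitoneOn (Ffun β C₂ C₃ p) (Set.Ici 0) ∧
    IntegrableOn (fun s => (Cfun β C₂ C₃ p s)⁻¹ * Gfun β C₂ C₃ p s) (Set.Ioi 0) ∧
    Tendsto (Ffun β C₂ C₃ p) atTop
      (nhds (-∫ s in Set.Ioi (0:ℝ), (Cfun β C₂ C₃ p s)⁻¹ * Gfun β C₂ C₃ p s)) ∧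
    ∃ B : ℝ, ∀ r : ℝ, 0 < r → -(Ffun β C₂ C₃ p r) ≤ B := by
  have hInt := integrableOn_h β C₂ C₃ p hp hC₂ hC₃
  have hII : ∀ a b : ℝ, 0 ≤ a → a ≤ b →
      IntervalIntegrable (fun s => (Cfun β C₂ C₃ p s)⁻¹ * Gfun β C₂ C₃ p s) volume a b := by
    intro a b ha hab
    rw [intervalIntegrable_iff_integrableOn_Ioc_of_le hab]
    exact hInt.mono_set fun x hx => lt_of_le_of_lt ha hx.1
  refine ⟨fun s _ => integrableOn_Cdiv β C₂ C₃ p hp hC₂ hC₃ s, ?_, hInt, ?_, ?_⟩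
  · -- AntitoneOn
    intro a ha b hb hab
    have hsplit := intervalIntegral.integral_add_adjacent_intervals
      (hII 0 a (le_refl 0) ha.out) (hII a b ha.out hab)
    have hpos : 0 ≤ ∫ s in a..b, (Cfun β C₂ C₃ p s)⁻¹ * Gfun β C₂ C₃ p s :=
      intervalIntegral.integral_nonneg hab fun x _ => h_nonneg β C₂ C₃ p x
    show -(∫ s in (0:ℝ)..b, (Cfun β C₂ C₃ p s)⁻¹ * Gfun β C₂ C₃ p s) ≤
      -(∫ s in (0:ℝ)..a, (Cfun β C₂ C₃ p s)⁻¹ * Gfun β C₂ C₃ p s)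
    rw [← hsplit]
    linarith
  · have := (intervalIntegral_tendsto_integral_Ioi 0 hInt tendsto_id).neg
    have e : Ffun β C₂ C₃ p =
        fun r => -∫ s in (0:ℝ)..r, (Cfun β C₂ C₃ p s)⁻¹ * Gfun β C₂ C₃ p s := rfl
    rw [e]
    exact this
  · refine ⟨∫ s in Set.Ioi (0:ℝ), (Cfun β C₂ C₃ p s)⁻¹ * Gfun β C₂ C₃ p s, fun r hr => ?_⟩
    have e : -(Ffun β C₂ C₃ p r) =
        ∫ s in (0:ℝ)..r, (Cfun β C₂ C₃ p s)⁻¹ * Gfun β C₂ C₃ p s := neg_neg _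
    rw [e, intervalIntegral.integral_of_le hr.le]
    exact setIntegral_mono_set hInt
      (ae_of_all _ fun x => h_nonneg β C₂ C₃ p x)
      (HasSubset.Subset.eventuallyLE Set.Ioc_subset_Ioi_self)
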